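/- arXiv:1405.0809 — 2 statements merged into one kernel-verified Lean document; each statement's English description precedes it below -/
import Mathlib

section
/- The GK theory consisting of the single pure formula ¬A(¬p) ⊃ Kp has a GK model M, and in every GK model M of this theory, K(M) is the deductive closure of {p}. -/
namespace GKPaper

/-- Propositional formulas over atoms of type `α`. -/
inductive PForm (α : Type) : Type
  | bot : PForm α
  | atom : α → PForm α
  | neg : PForm α → PForm α
  | and : PForm α → PForm α → PForm α
  | or : PForm α → PForm α → PForm α

namespace PForm

def top {α : Type} : PForm α := neg bot

def imp {α : Type} (f g : PForm α) : PForm α := or (neg f) g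

def eval {α : Type} (v : α → Prop) : PForm α → Prop
  | bot => False
  | atom a => v a
  | neg f => ¬ eval v f
  | and f g => eval v f ∧ eval v g
  | or f g => eval v f ∨ eval v g

end PForm

/-- Classical propositional entailment. -/
def Entails {α : Type} (Γ : Set (PForm α)) (ψ : PForm α) : Prop :=
  ∀ v : α → Prop, (∀ φ ∈ Γ, φ.eval v) → ψ.eval v

/-- Propositional deductive closure. -/
def Th {α : Type} (Γ : Set (PForm α)) : Set (PForm α) := { ψ | Entails Γ ψ }

/-- GK formulas: propositional formulas with modalities K and A. -/
inductive GKForm (α : Type) : Type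
  | bot : GKForm α
  | atom : α → GKForm α
  | neg : GKForm α → GKForm α
  | and : GKForm α → GKForm α → GKForm α
  | or : GKForm α → GKForm α → GKForm α
  | K : GKForm α → GKForm α
  | A : GKForm α → GKForm α

def GKForm.imp {α : Type} (f g : GKForm α) : GKForm α := .or (.neg f) g

def PForm.toGK {α : Type} : PForm α → GKForm α
  | .bot => .bot
  | .atom a => .atom a
  | .neg f => .neg f.toGK
  | .and f g => .and f.toGK g.toGK
  | .or f g => .or f.toGK g.toGK

/-- A Kripke interpretation for the logic of GK. -/
structure Kripke (α : Type) where
  W : Type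
  ne : Nonempty W
  pi : W → α → Prop
  RK : W → W → Prop
  RA : W → W → Prop
  s : W

/-- Satisfaction of a GK formula at a world. -/
def Kripke.sat {α : Type} (M : Kripke α) : M.W → GKForm α → Prop
  | _, .bot => False
  | w, .atom a => M.pi w a
  | w, .neg f => ¬ M.sat w f
  | w, .and f g => M.sat w f ∧ M.sat w g
  | w, .or f g => M.sat w f ∨ M.sat w g
  | w, .K f => ∀ u, M.RK w u → M.sat u f
  | w, .A f => ∀ u, M.RA w u → M.sat u f

/-- K(M): the propositional formulas known in M. -/
def Kset {α : Type} (M : Kripke α) : Set (PForm α) :=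
  { φ | M.sat M.s (.K φ.toGK) }

/-- A(M): the propositional formulas assumed in M. -/
def Aset {α : Type} (M : Kripke α) : Set (PForm α) :=
  { φ | M.sat M.s (.A φ.toGK) }

def Kripke.models {α : Type} (M : Kripke α) (T : Set (GKForm α)) : Prop :=
  ∀ F ∈ T, M.sat M.s F

/-- GK model of a GK theory. -/
def GKModel {α : Type} (M : Kripke α) (T : Set (GKForm α)) : Prop :=
  M.models T ∧ Kset M = Aset M ∧
    ¬ ∃ M₁ : Kripke α, M₁.models T ∧ Aset M₁ = Aset M ∧ Kset M₁ ⊂ Kset M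

/-- Pure GK formulas: Boolean combinations of K-atoms and A-atoms. -/
inductive PGK (α : Type) : Type
  | bot : PGK α
  | Katom : PForm α → PGK α
  | Aatom : PForm α → PGK α
  | neg : PGK α → PGK α
  | and : PGK α → PGK α → PGK α
  | or : PGK α → PGK α → PGK α

def PGK.imp {α : Type} (f g : PGK α) : PGK α := .or (.neg f) g

def PGK.toGK {α : Type} : PGK α → GKForm α
  | .bot => .bot
  | .Katom φ => .K φ.toGK
  | .Aatom φ => .A φ.toGK
  | .neg f => .neg f.toGK
  | .and f g => .and f.toGK g.toGK
  | .or f g => .or f.toGK g.toGK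

def Kripke.satP {α : Type} (M : Kripke α) (F : PGK α) : Prop := M.sat M.s F.toGK

def Kripke.modelsP {α : Type} (M : Kripke α) (T : Set (PGK α)) : Prop :=
  ∀ F ∈ T, M.satP F

def GKModelP {α : Type} (M : Kripke α) (T : Set (PGK α)) : Prop :=
  M.modelsP T ∧ Kset M = Aset M ∧
    ¬ ∃ M₁ : Kripke α, M₁.modelsP T ∧ Aset M₁ = Aset M ∧ Kset M₁ ⊂ Kset M

def PGK.atomK {α : Type} : PGK α → Set (PForm α)
  | .bot => ∅
  | .Katom φ => {φ}
  | .Aatom _ => ∅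
  | .neg f => f.atomK
  | .and f g => f.atomK ∪ g.atomK
  | .or f g => f.atomK ∪ g.atomK

def PGK.atomA {α : Type} : PGK α → Set (PForm α)
  | .bot => ∅
  | .Katom _ => ∅
  | .Aatom φ => {φ}
  | .neg f => f.atomA
  | .and f g => f.atomA ∪ g.atomA
  | .or f g => f.atomA ∪ g.atomA

def AtomK {α : Type} (T : Set (PGK α)) : Set (PForm α) := ⋃ F ∈ T, F.atomK
def AtomA {α : Type} (T : Set (PGK α)) : Set (PForm α) := ⋃ F ∈ T, F.atomA

/-- Fresh atoms used in the translation: `k φ` for Kφ, `a φ` for Aφ,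
    copies `pk p` (p^k), `pa p` (p^a), and witness copies `pkw ψ p` (p^{k_ψ}),
    `paw ψ p` (p^{a_ψ}). -/
inductive XAtom (α : Type) : Type
  | k : PForm α → XAtom α
  | a : PForm α → XAtom α
  | pk : α → XAtom α
  | pa : α → XAtom α
  | pkw : PForm α → α → XAtom α
  | paw : PForm α → α → XAtom α

/-- tr_p: replace K-atoms and A-atoms by fresh atoms. -/
def PGK.trp {α : Type} : PGK α → PForm (XAtom α)
  | .bot => .bot
  | .Katom φ => .atom (.k φ)
  | .Aatom φ => .atom (.a φ)
  | .neg f => .neg f.trp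
  | .and f g => .and f.trp g.trp
  | .or f g => .or f.trp g.trp

/-- `I` is a model of the formula Φ_T = tr_p(T) ∧ Φ_snd ∧ Φ^K_wit ∧ Φ^A_wit. -/
def SatPhi {α : Type} (T : Set (PGK α)) (I : XAtom α → Prop) : Prop :=
  (∀ F ∈ T, (PGK.trp F).eval I) ∧
  (∀ φ ∈ AtomK T, I (.k φ) → φ.eval (fun p => I (.pk p))) ∧
  (∀ φ ∈ AtomA T, I (.a φ) → φ.eval (fun p => I (.pa p))) ∧
  (∀ ψ ∈ AtomK T, ¬ I (.k ψ) →
      ¬ ψ.eval (fun p => I (.pkw ψ p)) ∧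
      ∀ φ ∈ AtomK T, I (.k φ) → φ.eval (fun p => I (.pkw ψ p))) ∧
  (∀ ψ ∈ AtomA T, ¬ I (.a ψ) →
      ¬ ψ.eval (fun p => I (.paw ψ p)) ∧
      ∀ φ ∈ AtomA T, I (.a φ) → φ.eval (fun p => I (.paw ψ p)))

/-- Reiter defaults and default theories. -/
structure Default (α : Type) where
  pre : PForm α
  jus : List (PForm α)
  con : PForm α

structure DefaultTheory (α : Type) where
  W : Set (PForm α)
  D : Set (Default α)

/-- `G` contains W, is deductively closed, and closed under applicable defaults w.r.t. `S`. -/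
def GammaClosed {α : Type} (Δ : DefaultTheory α) (S G : Set (PForm α)) : Prop :=
  Δ.W ⊆ G ∧ Th G = G ∧
    ∀ d ∈ Δ.D, d.pre ∈ G → (∀ ψ ∈ d.jus, PForm.neg ψ ∉ S) → d.con ∈ G

/-- Γ(S): the smallest such set. -/
def Gamma {α : Type} (Δ : DefaultTheory α) (S : Set (PForm α)) : Set (PForm α) :=
  ⋂₀ { G | GammaClosed Δ S G }

def IsExtension {α : Type} (Δ : DefaultTheory α) (E : Set (PForm α)) : Prop :=
  Gamma Δ E = E

/-- Literals. -/
inductive Lit (α : Type) : Type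
  | pos : α → Lit α
  | neg : α → Lit α

def Consistent {α : Type} (S : Set (Lit α)) : Prop :=
  ∀ a : α, ¬ (Lit.pos a ∈ S ∧ Lit.neg a ∈ S)

/-- Nested expressions. -/
inductive NExp (α : Type) : Type
  | lit : Lit α → NExp α
  | top : NExp α
  | bot : NExp α
  | not : NExp α → NExp α
  | conj : NExp α → NExp α → NExp α
  | disj : NExp α → NExp α → NExp α

def NExp.sat {α : Type} (S : Set (Lit α)) : NExp α → Prop
  | .lit l => l ∈ S
  | .top => True
  | .bot => False
  | .not F => ¬ NExp.sat S F
  | .conj F G => NExp.sat S F ∧ NExp.sat S G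
  | .disj F G => NExp.sat S F ∨ NExp.sat S G

def NExp.notFree {α : Type} : NExp α → Prop
  | .lit _ => True
  | .top => True
  | .bot => True
  | .not _ => False
  | .conj F G => F.notFree ∧ G.notFree
  | .disj F G => F.notFree ∧ G.notFree

open Classical in
/-- The reduct of a nested expression w.r.t. `S`. -/
noncomputable def NExp.reduct {α : Type} (S : Set (Lit α)) : NExp α → NExp α
  | .lit l => .lit l
  | .top => .top
  | .bot => .bot
  | .not F => if NExp.sat S F then .bot else .top
  | .conj F G => .conj (F.reduct S) (G.reduct S)
  | .disj F G => .disj (F.reduct S) (G.reduct S)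

structure Rule (α : Type) where
  head : NExp α
  body : NExp α

def SatProg {α : Type} (S : Set (Lit α)) (P : Set (Rule α)) : Prop :=
  ∀ r ∈ P, NExp.sat S r.body → NExp.sat S r.head

/-- Answer sets of not-free programs: minimal consistent sets satisfying the program. -/
def IsAnswerSetNF {α : Type} (P : Set (Rule α)) (S : Set (Lit α)) : Prop :=
  Consistent S ∧ SatProg S P ∧
    ∀ S' : Set (Lit α), Consistent S' → SatProg S' P → S' ⊆ S → S' = S

noncomputable def ReductProg {α : Type} (S : Set (Lit α)) (P : Set (Rule α)) : Set (Rule α) :=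
  (fun r => Rule.mk (r.head.reduct S) (r.body.reduct S)) '' P

def IsAnswerSet {α : Type} (P : Set (Rule α)) (S : Set (Lit α)) : Prop :=
  IsAnswerSetNF (ReductProg S P) S

/-- Formulas in negation normal form. -/
inductive NNF (α : Type) : Type
  | top : NNF α
  | bot : NNF α
  | pos : α → NNF α
  | neg : α → NNF α
  | and : NNF α → NNF α → NNF α
  | or : NNF α → NNF α → NNF α

def NNF.eval {α : Type} (v : α → Prop) : NNF α → Prop
  | .top => True
  | .bot => False
  | .pos a => v a
  | .neg a => ¬ v a
  | .and f g => f.eval v ∧ g.eval v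
  | .or f g => f.eval v ∨ g.eval v

/-- tr_ne: translate an NNF formula to a nested expression. -/
def NNF.toNExp {α : Type} : NNF α → NExp α
  | .top => .top
  | .bot => .bot
  | .pos a => .lit (.pos a)
  | .neg a => .lit (.neg a)
  | .and f g => .conj f.toNExp g.toNExp
  | .or f g => .disj f.toNExp g.toNExp

/-- Autoepistemic formulas: propositional formulas with belief modality L. -/
inductive AEForm (α : Type) : Type
  | bot : AEForm α
  | atom : α → AEForm α
  | L : AEForm α → AEForm α
  | neg : AEForm α → AEForm α
  | and : AEForm α → AEForm α → AEForm α
  | or : AEForm α → AEForm α → AEForm α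

def AEForm.imp {α : Type} (f g : AEForm α) : AEForm α := .or (.neg f) g

/-- Flatten an AE formula into a propositional formula treating L-atoms as fresh atoms. -/
def AEForm.flatten {α : Type} : AEForm α → PForm (α ⊕ AEForm α)
  | .bot => .bot
  | .atom a => .atom (.inl a)
  | .L φ => .atom (.inr φ)
  | .neg f => .neg f.flatten
  | .and f g => .and f.flatten g.flatten
  | .or f g => .or f.flatten g.flatten

/-- Deductive closure in the modal language, treating L-atoms as atoms. -/
def ThAE {α : Type} (Γ : Set (AEForm α)) : Set (AEForm α) :=
  { ψ | Entails (AEForm.flatten '' Γ) ψ.flatten }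

/-- Moore expansions. -/
def IsExpansion {α : Type} (A T : Set (AEForm α)) : Prop :=
  T = ThAE (A ∪ { F | ∃ φ ∈ T, F = AEForm.L φ } ∪ { F | ∃ φ ∉ T, F = AEForm.neg (AEForm.L φ) })

def PForm.toAE {α : Type} : PForm α → AEForm α
  | .bot => .bot
  | .atom a => .atom a
  | .neg f => .neg f.toAE
  | .and f g => .and f.toAE g.toAE
  | .or f g => .or f.toAE g.toAE

/-- Disjunctive logic program rules. -/
structure DRule (α : Type) where
  head : List α
  pos : List α
  neg : List α

/-- `S'` satisfies the GL reduct of `P` w.r.t. `S`. -/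
def SatDReduct {α : Type} (S' S : Set α) (P : Set (DRule α)) : Prop :=
  ∀ r ∈ P, (∀ a ∈ r.neg, a ∉ S) → (∀ a ∈ r.pos, a ∈ S') → ∃ a ∈ r.head, a ∈ S'

def IsDAnswerSet {α : Type} (P : Set (DRule α)) (S : Set α) : Prop :=
  SatDReduct S S P ∧ ∀ S' ⊆ S, SatDReduct S' S P → S' = S

/-- The Lin–Zhou style translation of a disjunctive rule to a pure GK formula. -/
def DRule.toGK {α : Type} (r : DRule α) : PGK α :=
  PGK.imp
    (PGK.and
      (r.pos.foldr (fun a f => PGK.and (.Katom (.atom a)) f) (PGK.neg .bot))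
      (r.neg.foldr (fun a f => PGK.and (.neg (.Aatom (.atom a))) f) (PGK.neg .bot)))
    (r.head.foldr (fun a f => PGK.or (.Katom (.atom a)) f) .bot)

lemma sat_toGK {α : Type} (M : Kripke α) (w : M.W) (φ : PForm α) :
    M.sat w φ.toGK ↔ φ.eval (M.pi w) := by
  induction φ <;> simp [PForm.toGK, Kripke.sat, PForm.eval, *]

lemma mem_Kset {α : Type} (M : Kripke α) (φ : PForm α) :
    φ ∈ Kset M ↔ ∀ u, M.RK M.s u → φ.eval (M.pi u) := by
  simp [Kset, Kripke.sat, sat_toGK]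

lemma mem_Aset {α : Type} (M : Kripke α) (φ : PForm α) :
    φ ∈ Aset M ↔ ∀ u, M.RA M.s u → φ.eval (M.pi u) := by
  simp [Aset, Kripke.sat, sat_toGK]

lemma Kset_closed {α : Type} (M : Kripke α) {Γ : Set (PForm α)} {ψ : PForm α}
    (hΓ : Γ ⊆ Kset M) (h : Entails Γ ψ) : ψ ∈ Kset M := by
  rw [mem_Kset]
  intro u hu
  exact h (M.pi u) fun φ hφ => (mem_Kset M φ).1 (hΓ hφ) u hu

lemma models_iff {α : Type} (p : α) (M : Kripke α) :
    M.models {GKForm.imp (.neg (.A (.neg (.atom p)))) (.K (.atom p))} ↔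
    (PForm.neg (.atom p) ∈ Aset M ∨ PForm.atom p ∈ Kset M) := by
  simp [Kripke.models, GKForm.imp, Kripke.sat, Kset, Aset, PForm.toGK, not_not]

lemma mem_Th_p {α : Type} (p : α) (φ : PForm α) :
    φ ∈ Th {PForm.atom p} ↔ ∀ v : α → Prop, v p → φ.eval v := by
  simp [Th, Entails, PForm.eval]

lemma neg_p_not_in_Th {α : Type} (p : α) :
    PForm.neg (.atom p) ∉ Th {PForm.atom p} := by
  rw [mem_Th_p]
  intro h
  exact h (fun _ => True) trivial trivial

lemma min_lemma {α : Type} (p : α) (M : Kripke α)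
    (hm : M.models {GKForm.imp (.neg (.A (.neg (.atom p)))) (.K (.atom p))})
    (hna : PForm.neg (.atom p) ∉ Aset M) :
    Th {PForm.atom p} ⊆ Kset M := by
  rcases (models_iff p M).1 hm with h | h
  · exact absurd h hna
  · intro φ hφ
    refine Kset_closed M (Γ := {PForm.atom p}) ?_ hφ
    intro ψ hψ
    rw [Set.mem_singleton_iff] at hψ
    subst hψ
    exact h

/-- The basic model whose K- and A-successors are the valuations satisfying p. -/
def M0 {α : Type} (p : α) : Kripke α where
  W := α → Prop
  ne := ⟨fun _ => True⟩
  pi := id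
  RK := fun _ u => u p
  RA := fun _ u => u p
  s := fun _ => True

lemma Kset_M0 {α : Type} (p : α) : Kset (M0 p) = Th {PForm.atom p} := by
  ext φ
  rw [mem_Kset, mem_Th_p]
  rfl

lemma Aset_M0 {α : Type} (p : α) : Aset (M0 p) = Th {PForm.atom p} := by
  ext φ
  rw [mem_Aset, mem_Th_p]
  rfl

/-- Extend a model: keep its A-structure but let K-successors be the
valuations satisfying `P`. -/
def Kext {α : Type} (M : Kripke α) (P : (α → Prop) → Prop) : Kripke α where
  W := M.W ⊕ (α → Prop)
  ne := ⟨.inl M.s⟩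
  pi := Sum.elim M.pi id
  RK := fun w u => w = .inl M.s ∧ ∃ v, u = .inr v ∧ P v
  RA := fun w u => ∃ w' u', w = .inl w' ∧ u = .inl u' ∧ M.RA w' u'
  s := .inl M.s

lemma Aset_Kext {α : Type} (M : Kripke α) (P : (α → Prop) → Prop) :
    Aset (Kext M P) = Aset M := by
  ext φ
  rw [mem_Aset, mem_Aset]
  constructor
  · intro h u hu
    exact h (.inl u) ⟨M.s, u, rfl, rfl, hu⟩
  · rintro h u ⟨w', u', hw, hu, hr⟩
    subst hu
    cases hw
    exact h u' hr

lemma mem_Kset_Kext {α : Type} (M : Kripke α) (P : (α → Prop) → Prop) (φ : PForm α) :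
    φ ∈ Kset (Kext M P) ↔ ∀ v : α → Prop, P v → φ.eval v := by
  rw [mem_Kset]
  constructor
  · intro h v hv
    exact h (.inr v) ⟨rfl, v, rfl, hv⟩
  · rintro h u ⟨_, v, rfl, hv⟩
    exact h v hv

end GKPaper

open GKPaper in
/-- the GK theory {¬A¬p ⊃ Kp} has a GK model, and in every GK model M
of it, K(M) = Th({p}). -/
theorem stmt3 {α : Type} (p : α) :
    (∃ M : Kripke α,
        GKModel M {GKForm.imp (.neg (.A (.neg (.atom p)))) (.K (.atom p))}) ∧
    ∀ M : Kripke α,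
        GKModel M {GKForm.imp (.neg (.A (.neg (.atom p)))) (.K (.atom p))} →
        Kset M = Th {PForm.atom p} := by
  constructor
  · refine ⟨M0 p, ?_, ?_, ?_⟩
    · rw [models_iff]
      right
      rw [Kset_M0, mem_Th_p]
      exact fun v hv => hv
    · rw [Kset_M0, Aset_M0]
    · rintro ⟨M₁, hm, ha, hsub⟩
      rw [Aset_M0] at ha
      have hna : PForm.neg (.atom p) ∉ Aset M₁ := by
        rw [ha]; exact neg_p_not_in_Th p
      have := min_lemma p M₁ hm hna
      rw [Kset_M0] at hsub
      exact hsub.2 this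
  · intro M ⟨hm, hKA, hmin⟩
    by_cases hnp : PForm.neg (.atom p) ∈ Aset M
    · exfalso
      apply hmin
      refine ⟨Kext M (fun _ => True), ?_, Aset_Kext M _, ?_, ?_⟩
      · rw [models_iff]
        left
        rw [Aset_Kext]
        exact hnp
      · intro φ hφ
        rw [mem_Kset_Kext] at hφ
        refine Kset_closed M (Γ := ∅) (by simp) ?_
        intro v _
        exact hφ v trivial
      · intro hsub
        have h1 : PForm.neg (.atom p) ∈ Kset (Kext M (fun _ => True)) := by
          apply hsub
          rw [hKA]; exact hnp
        rw [mem_Kset_Kext] at h1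
        exact h1 (fun _ => True) trivial trivial
    · have h1 : Th {PForm.atom p} ⊆ Kset M := min_lemma p M hm hnp
      refine Set.Subset.antisymm ?_ h1
      by_contra hne
      apply hmin
      refine ⟨Kext M (fun v => v p), ?_, Aset_Kext M _, ?_, ?_⟩
      · rw [models_iff]
        right
        rw [mem_Kset_Kext]
        exact fun v hv => hv
      · intro φ hφ
        rw [mem_Kset_Kext] at hφ
        exact h1 ((mem_Th_p p φ).2 hφ)
      · intro hsub
        apply hne
        intro φ hφ
        have := hsub hφ
        rw [mem_Kset_Kext] at this
        exact (mem_Th_p p φ).2 this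
end

section
/- Deciding whether a pure GK theory has a GK model is Σ²ₚ-hard; specifically, there is a polynomial-time (indeed modular, rule-by-rule) reduction from the existence of an answer set of a disjunctive logic program to the existence of a GK model of a pure GK theory, mapping each rule p₁;…;p_k ← p_{k+1},…,p_l, not p_{l+1},…, not p_m to the pure GK formula Kp_{k+1} ∧ … ∧ Kp_l ∧ ¬Ap_{l+1} ∧ … ∧ ¬Ap_m ⊃ Kp₁ ∨ … ∨ Kp_k, such that the program has an answer set iff the resulting GK theory has a GK model. -/
namespace GKAux

open GKPaper

lemma sat_toGK {α : Type} (M : Kripke α) (w : M.W) (φ : PForm α) :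
    M.sat w φ.toGK ↔ φ.eval (M.pi w) := by
  induction φ with
  | bot => simp [PForm.toGK, Kripke.sat, PForm.eval]
  | atom a => simp [PForm.toGK, Kripke.sat, PForm.eval]
  | neg f ih => simp [PForm.toGK, Kripke.sat, PForm.eval, ih]
  | and f g ihf ihg => simp [PForm.toGK, Kripke.sat, PForm.eval, ihf, ihg]
  | or f g ihf ihg => simp [PForm.toGK, Kripke.sat, PForm.eval, ihf, ihg]

lemma mem_Kset {α : Type} (M : Kripke α) (φ : PForm α) :
    φ ∈ Kset M ↔ ∀ u, M.RK M.s u → φ.eval (M.pi u) := by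
  show M.sat M.s (.K φ.toGK) ↔ _
  simp [Kripke.sat, sat_toGK]

lemma mem_Aset {α : Type} (M : Kripke α) (φ : PForm α) :
    φ ∈ Aset M ↔ ∀ u, M.RA M.s u → φ.eval (M.pi u) := by
  show M.sat M.s (.A φ.toGK) ↔ _
  simp [Kripke.sat, sat_toGK]

lemma sat_foldK {α : Type} (M : Kripke α) (l : List α) :
    M.sat M.s (PGK.toGK (l.foldr (fun a f => PGK.and (.Katom (.atom a)) f) (PGK.neg .bot)))
      ↔ ∀ a ∈ l, PForm.atom a ∈ Kset M := by
  induction l with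
  | nil => simp [PGK.toGK, Kripke.sat]
  | cons a l ih =>
      simp only [List.foldr_cons, PGK.toGK, Kripke.sat, ih, List.mem_cons]
      constructor
      · rintro ⟨h1, h2⟩ b (rfl | hb)
        · exact h1
        · exact h2 b hb
      · intro h
        exact ⟨h a (Or.inl rfl), fun b hb => h b (Or.inr hb)⟩

lemma sat_foldA {α : Type} (M : Kripke α) (l : List α) :
    M.sat M.s (PGK.toGK (l.foldr (fun a f => PGK.and (.neg (.Aatom (.atom a))) f) (PGK.neg .bot)))
      ↔ ∀ a ∈ l, PForm.atom a ∉ Aset M := by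
  induction l with
  | nil => simp [PGK.toGK, Kripke.sat]
  | cons a l ih =>
      simp only [List.foldr_cons, PGK.toGK, Kripke.sat, ih, List.mem_cons]
      constructor
      · rintro ⟨h1, h2⟩ b (rfl | hb)
        · exact h1
        · exact h2 b hb
      · intro h
        exact ⟨h a (Or.inl rfl), fun b hb => h b (Or.inr hb)⟩

lemma sat_foldH {α : Type} (M : Kripke α) (l : List α) :
    M.sat M.s (PGK.toGK (l.foldr (fun a f => PGK.or (.Katom (.atom a)) f) .bot))
      ↔ ∃ a ∈ l, PForm.atom a ∈ Kset M := by
  induction l with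
  | nil => simp [PGK.toGK, Kripke.sat]
  | cons a l ih =>
      simp only [List.foldr_cons, PGK.toGK, Kripke.sat, ih, List.mem_cons]
      constructor
      · rintro (h | ⟨b, hb, h⟩)
        · exact ⟨a, Or.inl rfl, h⟩
        · exact ⟨b, Or.inr hb, h⟩
      · rintro ⟨b, (rfl | hb), h⟩
        · exact Or.inl h
        · exact Or.inr ⟨b, hb, h⟩

lemma satP_rule {α : Type} (M : Kripke α) (r : DRule α) :
    M.satP r.toGK ↔
      (((∀ a ∈ r.pos, PForm.atom a ∈ Kset M) ∧ (∀ a ∈ r.neg, PForm.atom a ∉ Aset M)) →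
        ∃ a ∈ r.head, PForm.atom a ∈ Kset M) := by
  show M.sat M.s (PGK.toGK _) ↔ _
  simp only [DRule.toGK, PGK.imp, PGK.toGK, Kripke.sat, sat_foldK, sat_foldA, sat_foldH]
  tauto

def atomsOf {α : Type} (S : Set α) : Set (PForm α) := {φ | ∃ a ∈ S, φ = PForm.atom a}

lemma entails_atom {α : Type} (S : Set α) (a : α) :
    Entails (atomsOf S) (.atom a) ↔ a ∈ S := by
  constructor
  · intro h
    have := h (· ∈ S) (by rintro φ ⟨b, hb, rfl⟩; exact hb)
    exact this
  · intro hS v hv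
    exact hv _ ⟨a, hS, rfl⟩

lemma kset_entails {α : Type} (M : Kripke α) {Γ : Set (PForm α)} (h : Γ ⊆ Kset M)
    {φ : PForm α} (he : Entails Γ φ) : φ ∈ Kset M := by
  rw [mem_Kset]
  intro u hu
  exact he (M.pi u) (fun ψ hψ => (mem_Kset M ψ).1 (h hψ) u hu)

/-- The canonical Kripke model of a set of atoms. -/
def canonM {α : Type} (S : Set α) : Kripke α where
  W := {v : α → Prop // ∀ a ∈ S, v a}
  ne := ⟨⟨(· ∈ S), fun _ h => h⟩⟩
  pi := fun w a => w.1 a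
  RK := fun _ _ => True
  RA := fun _ _ => True
  s := ⟨(· ∈ S), fun _ h => h⟩

lemma kset_canon {α : Type} (S : Set α) : Kset (canonM S) = Th (atomsOf S) := by
  ext φ
  rw [mem_Kset]
  constructor
  · intro h v hv
    exact h ⟨v, fun a ha => hv _ ⟨a, ha, rfl⟩⟩ trivial
  · intro h u _
    exact h u.1 (by rintro ψ ⟨b, hb, rfl⟩; exact u.2 b hb)

lemma aset_canon {α : Type} (S : Set α) : Aset (canonM S) = Th (atomsOf S) := by
  ext φ
  rw [mem_Aset]
  constructor
  · intro h v hv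
    exact h ⟨v, fun a ha => hv _ ⟨a, ha, rfl⟩⟩ trivial
  · intro h u _
    exact h u.1 (by rintro ψ ⟨b, hb, rfl⟩; exact u.2 b hb)

lemma mem_Th_atom {α : Type} (S : Set α) (a : α) :
    PForm.atom a ∈ Th (atomsOf S) ↔ a ∈ S := entails_atom S a

/-- Mixed model: K-successors are the models of the atoms in `S'`,
A-successors simulate those of `M`. -/
def mixM {α : Type} (M : Kripke α) (S' : Set α) : Kripke α where
  W := M.W ⊕ {v : α → Prop // ∀ a ∈ S', v a}
  ne := ⟨Sum.inl M.s⟩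
  pi := fun w a => match w with | .inl u => M.pi u a | .inr v => v.1 a
  RK := fun w u => w = Sum.inl M.s ∧ ∃ v, u = Sum.inr v
  RA := fun w u => ∃ w' u', w = Sum.inl w' ∧ u = Sum.inl u' ∧ M.RA w' u'
  s := Sum.inl M.s

lemma kset_mix {α : Type} (M : Kripke α) (S' : Set α) :
    Kset (mixM M S') = Th (atomsOf S') := by
  ext φ
  rw [mem_Kset]
  constructor
  · intro h v hv
    exact h (Sum.inr ⟨v, fun a ha => hv _ ⟨a, ha, rfl⟩⟩) ⟨rfl, _, rfl⟩
  · rintro h u ⟨-, v, rfl⟩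
    exact h v.1 (by rintro ψ ⟨b, hb, rfl⟩; exact v.2 b hb)

lemma aset_mix {α : Type} (M : Kripke α) (S' : Set α) :
    Aset (mixM M S') = Aset M := by
  ext φ
  rw [mem_Aset, mem_Aset]
  constructor
  · intro h u hu
    exact h (Sum.inl u) ⟨M.s, u, rfl, rfl, hu⟩
  · rintro h u ⟨w', u', hw, rfl, hu⟩
    rw [show w' = M.s from (Sum.inl.injEq _ _ ▸ hw).symm] at hu
    exact h u' hu

end GKAux

open GKPaper in
/-- the rule-by-rule translation from disjunctive programs to pure GK
theories is a correct reduction: P has an answer set iff its translation has a GK model. -/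
theorem stmt17 {α : Type} (P : Set (DRule α)) :
    (∃ S : Set α, IsDAnswerSet P S) ↔
      ∃ M : Kripke α, GKModelP M (DRule.toGK '' P) := by
  constructor
  · -- answer set ⟹ GK model
    rintro ⟨S, hS, hmin⟩
    refine ⟨GKAux.canonM S, ?_, ?_, ?_⟩
    · rintro F ⟨r, hr, rfl⟩
      rw [GKAux.satP_rule]
      rintro ⟨hpos, hneg⟩
      obtain ⟨a, ha, haS⟩ := hS r hr
        (fun a hn => by
          intro haS
          exact hneg a hn ((GKAux.aset_canon S ▸ (GKAux.mem_Th_atom S a).2 haS)))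
        (fun a hp => (GKAux.mem_Th_atom S a).1 (GKAux.kset_canon S ▸ hpos a hp))
      exact ⟨a, ha, GKAux.kset_canon S ▸ (GKAux.mem_Th_atom S a).2 haS⟩
    · rw [GKAux.kset_canon, GKAux.aset_canon]
    · rintro ⟨M₁, hmod, hA, hsub⟩
      set S' : Set α := {a | PForm.atom a ∈ Kset M₁} with hS'
      have hsubS : S' ⊆ S := by
        intro a ha
        have : PForm.atom a ∈ Kset (GKAux.canonM S) := hsub.1 ha
        rw [GKAux.kset_canon, GKAux.mem_Th_atom] at this
        exact this
      have hred : SatDReduct S' S P := by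
        intro r hr hneg hpos
        have := (GKAux.satP_rule M₁ r).1 (hmod _ ⟨r, hr, rfl⟩)
        obtain ⟨a, ha, haK⟩ := this ⟨fun a hp => hpos a hp, fun a hn haA => by
          have : PForm.atom a ∈ Aset (GKAux.canonM S) := hA ▸ haA
          rw [GKAux.aset_canon, GKAux.mem_Th_atom] at this
          exact hneg a hn this⟩
        exact ⟨a, ha, haK⟩
      have hSS : S' = S := hmin S' hsubS hred
      have : Kset (GKAux.canonM S) ⊆ Kset M₁ := by
        rw [GKAux.kset_canon]
        intro φ hφ
        refine GKAux.kset_entails M₁ ?_ hφ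
        rintro ψ ⟨a, ha, rfl⟩
        rw [← hSS] at ha
        exact ha
      exact hsub.2 this
  · -- GK model ⟹ answer set
    rintro ⟨M, hmod, hKA, hmin⟩
    set S : Set α := {a | PForm.atom a ∈ Kset M} with hSdef
    refine ⟨S, ?_, ?_⟩
    · intro r hr hneg hpos
      have := (GKAux.satP_rule M r).1 (hmod _ ⟨r, hr, rfl⟩)
      obtain ⟨a, ha, haK⟩ := this ⟨fun a hp => hpos a hp,
        fun a hn haA => hneg a hn (by show PForm.atom a ∈ Kset M; rw [hKA]; exact haA)⟩
      exact ⟨a, ha, haK⟩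
    · intro S' hsub hred
      by_contra hne
      apply hmin
      refine ⟨GKAux.mixM M S', ?_, GKAux.aset_mix M S', ?_⟩
      · rintro F ⟨r, hr, rfl⟩
        rw [GKAux.satP_rule]
        rintro ⟨hpos, hneg⟩
        obtain ⟨a, ha, haS'⟩ := hred r hr
          (fun a hn haS => by
            refine hneg a hn ?_
            rw [GKAux.aset_mix, ← hKA]
            exact haS)
          (fun a hp => by
            have := hpos a hp
            rw [GKAux.kset_mix, GKAux.mem_Th_atom] at this
            exact this)
        refine ⟨a, ha, ?_⟩
        rw [GKAux.kset_mix]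
        exact (GKAux.mem_Th_atom S' a).2 haS'
      · constructor
        · rw [GKAux.kset_mix]
          intro φ hφ
          refine GKAux.kset_entails M ?_ hφ
          rintro ψ ⟨a, ha, rfl⟩
          exact hsub ha
        · intro hKsub
          apply hne
          apply Set.Subset.antisymm hsub
          intro a haS
          have : PForm.atom a ∈ Kset (GKAux.mixM M S') := hKsub haS
          rw [GKAux.kset_mix, GKAux.mem_Th_atom] at this
          exact this
end
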